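/- Let W be a sequentially compact Hausdorff topological space (first countable) with a lower semicontinuous asymmetric quasi-distance d_W (satisfying d_W(x,x)=0 and the triangle inequality). Let Z be first countable, z_0 an accumulation point of Z, and v: Z → W a function such that lim_{z,z'→z_0} min(d_W(v(z),v(z')), d_W(v(z'),v(z))) = 0 and the set of all limit points of v near z_0 is separated by d_W (i.e. two points u,w in it with d_W(u,w)=0 must be equal). Then the limit v̄ := lim_{z→z_0} v(z) exists in W. -/

import Mathlib

open Filter Topology Set ENNReal

/-- existence of the limit of `v` at `z₀` for a map into a sequentially
compact Hausdorff first-countable space with a l.s.c. asymmetric quasi-distance,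
under the asymmetric Cauchy condition and separation of the set of limit points. -/
theorem stmt0 {W Z : Type*} [TopologicalSpace W] [T2Space W]
    [FirstCountableTopology W] [SeqCompactSpace W]
    [TopologicalSpace Z] [FirstCountableTopology Z]
    (dW : W → W → ℝ≥0∞)
    (hrefl : ∀ x, dW x x = 0)
    (htri : ∀ x y z, dW x z ≤ dW x y + dW y z)
    (hlsc : LowerSemicontinuous (fun p : W × W => dW p.1 p.2))
    (z0 : Z) [hz0 : (𝓝[≠] z0).NeBot]
    (v : Z → W)
    (hcauchy : Tendsto (fun p : Z × Z => min (dW (v p.1) (v p.2)) (dW (v p.2) (v p.1)))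
      ((𝓝[≠] z0) ×ˢ (𝓝[≠] z0)) (𝓝 0))
    (hsep : ∀ u w : W, (∀ N ∈ 𝓝 z0, u ∈ closure (v '' N)) →
      (∀ N ∈ 𝓝 z0, w ∈ closure (v '' N)) → dW u w = 0 → u = w) :
    ∃ w : W, Tendsto v (𝓝[≠] z0) (𝓝 w) := by
  obtain ⟨s, hs⟩ := (𝓝[≠] z0).exists_antitone_basis
  have hmem : ∀ n, s n ∈ 𝓝[≠] z0 := fun n => hs.toHasBasis.mem_of_mem trivial
  have hne : ∀ n, (s n).Nonempty := fun n => Filter.nonempty_of_mem (hmem n)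
  set Good : W → Prop :=
    fun u => ∃ t : ℕ → Z, (∀ n, t n ∈ s n) ∧ Tendsto (v ∘ t) atTop (𝓝 u) with hGood
  have htendF : ∀ t : ℕ → Z, (∀ n, t n ∈ s n) → Tendsto t atTop (𝓝[≠] z0) :=
    fun t ht => hs.tendsto ht
  -- Good points belong to the set of limit points of `v` near `z0`.
  have hA : ∀ u, Good u → ∀ N ∈ 𝓝 z0, u ∈ closure (v '' N) := by
    rintro u ⟨t, ht, htend⟩ N hN
    have hNF : N ∈ 𝓝[≠] z0 := nhdsWithin_le_nhds hN
    obtain ⟨n, -, hn⟩ := hs.toHasBasis.mem_iff.mp hNF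
    have hev : ∀ᶠ k in atTop, (v ∘ t) k ∈ v '' N := by
      filter_upwards [eventually_ge_atTop n] with k hk
      exact ⟨t k, hn (hs.antitone hk (ht k)), rfl⟩
    exact mem_closure_of_tendsto htend hev
  -- Any two good points coincide.
  have hB : ∀ u w, Good u → Good w → u = w := by
    rintro u w hu hw
    obtain ⟨t, ht, htu⟩ := hu
    obtain ⟨r, hr, hrw⟩ := hw
    have hpair : Tendsto (fun k => (t k, r k)) atTop ((𝓝[≠] z0) ×ˢ (𝓝[≠] z0)) :=
      (htendF t ht).prodMk (htendF r hr)
    have hmin : Tendsto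
        (fun k => min (dW (v (t k)) (v (r k))) (dW (v (r k)) (v (t k)))) atTop (𝓝 0) :=
      hcauchy.comp hpair
    have key : dW u w = 0 ∨ dW w u = 0 := by
      by_contra h
      push_neg at h
      have hpos : 0 < min (dW u w) (dW w u) :=
        lt_min (pos_iff_ne_zero.mpr h.1) (pos_iff_ne_zero.mpr h.2)
      obtain ⟨c, hc0, hclt⟩ := exists_between hpos
      have h1 : ∀ᶠ p in 𝓝 (u, w), c < dW p.1 p.2 :=
        hlsc (u, w) c (hclt.trans_le (min_le_left _ _))
      have h2 : ∀ᶠ p in 𝓝 (w, u), c < dW p.1 p.2 :=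
        hlsc (w, u) c (hclt.trans_le (min_le_right _ _))
      have htuw : Tendsto (fun k => (v (t k), v (r k))) atTop (𝓝 (u, w)) :=
        htu.prodMk_nhds hrw
      have htwu : Tendsto (fun k => (v (r k), v (t k))) atTop (𝓝 (w, u)) :=
        hrw.prodMk_nhds htu
      have e1 : ∀ᶠ k in atTop, c < dW (v (t k)) (v (r k)) := htuw.eventually h1
      have e2 : ∀ᶠ k in atTop, c < dW (v (r k)) (v (t k)) := htwu.eventually h2
      have e3 : ∀ᶠ k in atTop,
          min (dW (v (t k)) (v (r k))) (dW (v (r k)) (v (t k))) < c :=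
        hmin.eventually (Iio_mem_nhds hc0)
      obtain ⟨k, h1k, h2k, h3k⟩ := (e1.and (e2.and e3)).exists
      exact absurd h3k (not_lt.mpr (le_min h1k.le h2k.le))
    rcases key with h0 | h0
    · exact hsep u w (hA u ⟨t, ht, htu⟩) (hA w ⟨r, hr, hrw⟩) h0
    · exact (hsep w u (hA w ⟨r, hr, hrw⟩) (hA u ⟨t, ht, htu⟩) h0).symm
  -- Existence of a good point.
  choose t ht using hne
  obtain ⟨w, φ, hφ, hwt⟩ := SeqCompactSpace.tendsto_subseq (v ∘ t)
  have hGw : Good w :=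
    ⟨t ∘ φ, fun n => hs.antitone (hφ.le_apply) (ht (φ n)), hwt⟩
  refine ⟨w, ?_⟩
  by_contra hnot
  obtain ⟨S, hS, hfreq⟩ := not_tendsto_iff_exists_frequently_notMem.mp hnot
  obtain ⟨U, hUS, hUopen, hwU⟩ := mem_nhds_iff.mp hS
  have hfreqU : ∃ᶠ z in 𝓝[≠] z0, v z ∉ U :=
    hfreq.mono fun z hz hzU => hz (hUS hzU)
  have hsel : ∀ n, ∃ z ∈ s n, v z ∉ U := fun n =>
    Filter.frequently_iff.mp hfreqU (hmem n)
  choose a ha haU using hsel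
  obtain ⟨u, ψ, hψ, hau⟩ := SeqCompactSpace.tendsto_subseq (v ∘ a)
  have hGu : Good u := ⟨a ∘ ψ, fun n => hs.antitone (hψ.le_apply) (ha (ψ n)), hau⟩
  have huw : u = w := hB u w hGu hGw
  have hucl : u ∉ U := by
    have hclosed : IsClosed Uᶜ := hUopen.isClosed_compl
    exact hclosed.mem_of_tendsto hau (Eventually.of_forall fun k => haU (ψ k))
  exact hucl (huw ▸ hwU)
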